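/- Let d ≥ 2 be an integer and a > 0 with a ≥ (6/π²)·(d−1)/(d+2), so that R := (π²/3)·(1 + 2/d) − (2/a)·(1 − 1/d) ≥ 0. Then for every k ∈ [0, π]: d·Q̂_{ISq,a}(k) > Q̂_{ISq,a}(0) holds if and only if k < π − √R, where Q̂_{ISq,a}(k) = ∑_{n∈ℤ} Q_{ISq,a}(n)·cos(n·k). -/

import Mathlib

/-- Fourier transform of the inverse square transfer operator with parameter `a`:
`Q(0) = 1`, `Q(n) = a/n²` for `n ≠ 0`. -/
noncomputable def isqFourier (a k : ℝ) : ℝ :=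
  1 + ∑' n : {n : ℤ // n ≠ 0}, a / ((n : ℤ) : ℝ) ^ 2 * Real.cos ((n : ℤ) * k)

lemma bern_two : (bernoulli 2 : ℚ) = 1 / 6 := by
  rw [bernoulli_eq_bernoulli'_of_ne_one (by norm_num), bernoulli'_two]

lemma isq_hasSum (a : ℝ) {k : ℝ} (hk : k ∈ Set.Icc (0 : ℝ) Real.pi) :
    HasSum (fun n : ℤ => a / ((n : ℝ)) ^ 2 * Real.cos ((n : ℝ) * k))
      (a * (k ^ 2 / 2 - Real.pi * k + Real.pi ^ 2 / 3)) := by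
  have hπ := Real.pi_pos
  have hx : k / (2 * Real.pi) ∈ Set.Icc (0 : ℝ) 1 := by
    constructor
    · exact div_nonneg hk.1 (by positivity)
    · rw [div_le_one (by positivity)]; nlinarith [hk.2]
  have h := hasSum_one_div_nat_pow_mul_cos (k := 1) one_ne_zero hx
  have hB : (Polynomial.map (algebraMap ℚ ℝ) (Polynomial.bernoulli (2 * 1))).eval
      (k / (2 * Real.pi)) = (k / (2 * Real.pi)) ^ 2 - (k / (2 * Real.pi)) + 1 / 6 := by
    norm_num [Polynomial.bernoulli, Finset.sum_range_succ, bernoulli_one, bernoulli_zero,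
      bern_two]
    ring
  have hN : HasSum (fun n : ℕ => a / ((n : ℝ)) ^ 2 * Real.cos ((n : ℝ) * k))
      (a * (k ^ 2 / 4 - Real.pi * k / 2 + Real.pi ^ 2 / 6)) := by
    have h2 := h.mul_left a
    convert h2 using 2 with n
    · rfl
    · have harg : 2 * Real.pi * (n : ℝ) * (k / (2 * Real.pi)) = (n : ℝ) * k := by
        field_simp
      rw [harg]; ring
    · rw [hB]
      norm_num [Nat.factorial]
      field_simp
      ring
  have hNeg : HasSum (fun n : ℕ => (fun m : ℤ => a / ((m : ℝ)) ^ 2 *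
      Real.cos ((m : ℝ) * k)) (-(n : ℤ)))
      (a * (k ^ 2 / 4 - Real.pi * k / 2 + Real.pi ^ 2 / 6)) := by
    convert hN using 2 with n
    push_cast
    rw [neg_mul, Real.cos_neg, neg_sq]
  have hNat : HasSum (fun n : ℕ => (fun m : ℤ => a / ((m : ℝ)) ^ 2 *
      Real.cos ((m : ℝ) * k)) ((n : ℤ)))
      (a * (k ^ 2 / 4 - Real.pi * k / 2 + Real.pi ^ 2 / 6)) := by
    convert hN using 2 with n
    simp
  have hInt := HasSum.of_nat_of_neg
    (f := fun m : ℤ => a / ((m : ℝ)) ^ 2 * Real.cos ((m : ℝ) * k)) hNat hNeg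
  have h0 : (fun m : ℤ => a / ((m : ℝ)) ^ 2 * Real.cos ((m : ℝ) * k)) 0 = 0 := by
    simp
  rw [show a / ((0:ℤ):ℝ) ^ 2 * Real.cos (((0:ℤ):ℝ) * k) = 0 by simp, sub_zero] at hInt
  convert hInt using 1
  · rfl
  ring

lemma isq_eq (a : ℝ) {k : ℝ} (hk : k ∈ Set.Icc (0 : ℝ) Real.pi) :
    isqFourier a k = 1 + a * (k ^ 2 / 2 - Real.pi * k + Real.pi ^ 2 / 3) := by
  unfold isqFourier
  congr 1
  have h := isq_hasSum a hk
  have hsub : HasSum ((fun n : ℤ => a / ((n : ℝ)) ^ 2 * Real.cos ((n : ℝ) * k)) ∘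
      ((↑) : {n : ℤ // n ≠ 0} → ℤ)) (a * (k ^ 2 / 2 - Real.pi * k + Real.pi ^ 2 / 3)) := by
    erw [hasSum_subtype_iff_of_support_subset (s := {n : ℤ | n ≠ 0})]
    · exact h
    · intro n hn
      simp only [Function.mem_support, ne_eq] at hn
      intro h0
      apply hn
      rw [h0]
      simp
  exact hsub.tsum_eq

theorem stmt19 (d : ℕ) (hd : 2 ≤ d) (a : ℝ) (ha : 0 < a)
    (ha' : 6 / Real.pi ^ 2 * (((d : ℝ) - 1) / ((d : ℝ) + 2)) ≤ a) :
    0 ≤ Real.pi ^ 2 / 3 * (1 + 2 / (d : ℝ)) - 2 / a * (1 - 1 / (d : ℝ)) ∧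
    ∀ k ∈ Set.Icc (0 : ℝ) Real.pi,
      ((d : ℝ) * isqFourier a k > isqFourier a 0 ↔
        k < Real.pi - Real.sqrt
          (Real.pi ^ 2 / 3 * (1 + 2 / (d : ℝ)) - 2 / a * (1 - 1 / (d : ℝ)))) := by
  have hπ := Real.pi_pos
  set D := (d : ℝ) with hDdef
  have hD2 : (2 : ℝ) ≤ D := by rw [hDdef]; exact_mod_cast hd
  have hD0 : (0 : ℝ) < D := by linarith
  set R := Real.pi ^ 2 / 3 * (1 + 2 / D) - 2 / a * (1 - 1 / D) with hRdef
  have h6 : 6 * ((D - 1) / (D + 2)) ≤ a * Real.pi ^ 2 := by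
    have hp2 : (0 : ℝ) < Real.pi ^ 2 := by positivity
    have := mul_le_mul_of_nonneg_left ha' hp2.le
    calc 6 * ((D - 1) / (D + 2)) = Real.pi ^ 2 * (6 / Real.pi ^ 2 * ((D - 1) / (D + 2))) := by
          have h62 : Real.pi ^ 2 * (6 / Real.pi ^ 2) = 6 := by
            field_simp
          rw [← mul_assoc, h62]
      _ ≤ Real.pi ^ 2 * a := this
      _ = a * Real.pi ^ 2 := by ring
  have h6' : 6 * (D - 1) ≤ a * Real.pi ^ 2 * (D + 2) := by
    have hD2' : (0 : ℝ) < D + 2 := by linarith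
    have h := mul_le_mul_of_nonneg_right h6 hD2'.le
    calc 6 * (D - 1) = 6 * ((D - 1) / (D + 2)) * (D + 2) := by field_simp
      _ ≤ a * Real.pi ^ 2 * (D + 2) := h
  have hR : 0 ≤ R := by
    rw [hRdef, sub_nonneg]
    have e1 : 2 / a * (1 - 1 / D) = 2 * (D - 1) / (a * D) := by
      field_simp
    have e2 : Real.pi ^ 2 / 3 * (1 + 2 / D) = Real.pi ^ 2 * (D + 2) / (3 * D) := by
      field_simp
    rw [e1, e2, div_le_div_iff₀ (by positivity) (by positivity)]
    nlinarith [mul_le_mul_of_nonneg_right h6' hD0.le]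
  refine ⟨hR, ?_⟩
  intro k hk
  rw [isq_eq a hk, isq_eq a (Set.mem_Icc.mpr ⟨le_refl 0, hπ.le⟩)]
  have hkey : D * (1 + a * (k ^ 2 / 2 - Real.pi * k + Real.pi ^ 2 / 3)) -
      (1 + a * ((0:ℝ) ^ 2 / 2 - Real.pi * 0 + Real.pi ^ 2 / 3)) =
      D * a / 2 * ((Real.pi - k) ^ 2 - R) := by
    rw [hRdef]
    field_simp
    ring
  have hDa : (0 : ℝ) < D * a / 2 := by positivity
  constructor
  · intro h
    have h1 : 0 < D * a / 2 * ((Real.pi - k) ^ 2 - R) := by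
      rw [← hkey]; exact sub_pos.mpr h
    have h2 : R < (Real.pi - k) ^ 2 := by
      by_contra h'
      push_neg at h'
      nlinarith [mul_nonneg hDa.le (neg_nonneg.mpr (sub_nonpos.mpr h'))]
    have h3 : Real.sqrt R < Real.sqrt ((Real.pi - k) ^ 2) :=
      Real.sqrt_lt_sqrt hR h2
    rw [Real.sqrt_sq (by linarith [hk.2] : (0:ℝ) ≤ Real.pi - k)] at h3
    linarith
  · intro h
    have hs : Real.sqrt R < Real.pi - k := by linarith
    have h2 : R < (Real.pi - k) ^ 2 := by
      nlinarith [Real.sq_sqrt hR, Real.sqrt_nonneg R]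
    have h1 : 0 < D * a / 2 * ((Real.pi - k) ^ 2 - R) := by
      apply mul_pos hDa; linarith
    rw [← hkey] at h1
    exact sub_pos.mp h1
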